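/- If r = 1, then every forward orbit of f reaches a fixed point in finitely many iterations: for every x ≥ 0 there exists n ≥ 0 such that f(fⁿ(x)) = fⁿ(x); in particular f^{n+k}(x) = fⁿ(x) for all k ≥ 0 and the eventual value lies in the interval [x_l, x_u] of fixed points. -/

import Mathlib

/-- If r = 1, every forward orbit of f reaches, in finitely many
iterations, a fixed point lying in the segment [x_l, x_u] of fixed points. -/
theorem orbits_reach_fixed_points
    (bU bL gU gL r xl xu xm : ℝ) (f : ℝ → ℝ)
    (h1 : bU ≥ gU) (h2 : gU ≥ bL) (h3 : bL ≥ gL) (h4 : gL ≥ 0)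
    (h5 : 0 < bL) (h6 : bL < bU) (h7 : gL < gU)
    (hr : r = (gU - gL) / (bU - bL))
    (hxl : xl = 1 / (gL + 2 * bU * r))
    (hxu : xu = 1 / (gU + 2 * bL * r))
    (hxm : xm = 1 / gU)
    (hf1 : ∀ x : ℝ, 0 ≤ x → x ≤ xl → f x = (1 - gL * x) / (2 * bU))
    (hf2 : ∀ x : ℝ, xl ≤ x → x ≤ xu → f x = r * x)
    (hf3 : ∀ x : ℝ, xu ≤ x → x ≤ xm → f x = (1 - gU * x) / (2 * bL))
    (hf4 : ∀ x : ℝ, xm ≤ x → f x = 0)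
    (hr1 : r = 1) :
    ∀ x : ℝ, 0 ≤ x → ∃ n : ℕ,
      f (f^[n] x) = f^[n] x ∧
      xl ≤ f^[n] x ∧ f^[n] x ≤ xu ∧
      ∀ k : ℕ, f^[n + k] x = f^[n] x := by
  subst hr1
  -- basic positivity
  have hbU : (0:ℝ) < bU := lt_trans h5 h6
  have hgU : (0:ℝ) < gU := lt_of_le_of_lt h4 h7
  have hd : gU - gL = bU - bL := by
    have hne : bU - bL ≠ 0 := by linarith
    field_simp at hr
    linarith
  have hA : (0:ℝ) < gL + 2 * bU := by linarith
  have hB : (0:ℝ) < gU + 2 * bL := by linarith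
  have hxl1 : xl * (gL + 2 * bU) = 1 := by
    rw [hxl]; field_simp
  have hxu1 : xu * (gU + 2 * bL) = 1 := by
    rw [hxu]; field_simp
  have hxm1 : xm * gU = 1 := by
    rw [hxm]; field_simp
  have hxl0 : (0:ℝ) < xl := by
    rw [hxl]; positivity
  have hgg : gL * gU ≤ bL * bU := mul_le_mul h3 h1 hgU.le h5.le
  have hbb : (0:ℝ) < bL * bU := mul_pos h5 hbU
  have hxlu : xl < xu := by
    rw [hxl, hxu]
    exact one_div_lt_one_div_of_lt (by linarith) (by linarith)
  have hxum : xu < xm := by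
    rw [hxu, hxm]
    exact one_div_lt_one_div_of_lt hgU (by linarith)
  set xstar : ℝ := (2*bL - gL) / (4*bL*bU - gL*gU) with hxstar
  have hD : (0:ℝ) < 4*bL*bU - gL*gU := by linarith
  have hxs : xstar * (4*bL*bU - gL*gU) = 2*bL - gL := by
    rw [hxstar]; exact div_mul_cancel₀ _ hD.ne'
  have hxsu : xstar < xu := by
    rw [hxstar, div_lt_iff₀ hD]
    have hxu' : xu = 1 / (gU + 2*bL) := by rw [hxu]; ring_nf
    rw [hxu', div_mul_eq_mul_div, lt_div_iff₀ hB]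
    have hneg : gU - gL + 2*bL - 2*bU < 0 := by linarith
    nlinarith [mul_pos h5 (neg_pos.mpr hneg)]
  -- the middle branch consists of fixed points
  have hfix : ∀ z : ℝ, xl ≤ z → z ≤ xu → f z = z := by
    intro z hz1 hz2
    rw [hf2 z hz1 hz2]; ring
  -- key inductive lemma for the right branch
  have key : ∀ n : ℕ, ∀ x : ℝ, xu < x → x ≤ xm →
      x - xstar ≤ (xu - xstar) * 2^n →
      ∃ m : ℕ, xl ≤ f^[m] x ∧ f^[m] x ≤ xu := by
    intro n
    induction n with
    | zero =>
      intro x hx1 _ hx3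
      exfalso
      simp only [pow_zero, mul_one] at hx3
      linarith
    | succ n ih =>
      intro x hx1 hx2 hx3
      have hy : f x = (1 - gU * x) / (2*bL) := hf3 x (le_of_lt hx1) hx2
      have hgUx : gU * x ≤ 1 := by
        have := mul_le_mul_of_nonneg_left hx2 hgU.le
        linarith
      have hy0 : 0 ≤ f x := by
        rw [hy]; apply div_nonneg (by linarith) (by linarith)
      have hyu : f x < xu := by
        rw [hy, div_lt_iff₀ (by linarith : (0:ℝ) < 2*bL)]
        linarith [mul_lt_mul_of_pos_left hx1 hgU]
      by_cases hyl : xl ≤ f x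
      · exact ⟨1, by simpa using hyl, by simpa using le_of_lt hyu⟩
      · push_neg at hyl
        have hz : f (f x) = (1 - gL * (f x)) / (2*bU) := hf1 _ hy0 (le_of_lt hyl)
        have hzl : xl ≤ f (f x) := by
          rw [hz, le_div_iff₀ (by linarith : (0:ℝ) < 2*bU)]
          linarith [mul_le_mul_of_nonneg_left hyl.le h4]
        by_cases hzu : f (f x) ≤ xu
        · refine ⟨2, ?_, ?_⟩
          · show xl ≤ f^[2] x
            rw [show f^[2] x = f (f x) by simp [Function.iterate_succ_apply']]
            exact hzl
          · show f^[2] x ≤ xu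
            rw [show f^[2] x = f (f x) by simp [Function.iterate_succ_apply']]
            exact hzu
        · push_neg at hzu
          have hzm : f (f x) ≤ xm := by
            have h2bU : gU ≤ 2*bU := by linarith
            rw [hz, hxm, div_le_div_iff₀ (by linarith : (0:ℝ) < 2*bU) hgU]
            linarith [mul_nonneg (mul_nonneg h4 hy0) hgU.le]
          -- contraction estimate
          have e1 : f x * (2*bL) = 1 - gU * x := by
            rw [hy]; field_simp
          have e2 : f (f x) * (2*bU) = 1 - gL * (f x) := by
            rw [hz]; field_simp
          have e3 : f (f x) * (4*bL*bU) = 2*bL - gL + gL*gU*x := by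
            linear_combination 2*bL*e2 - gL*e1
          have e4 : (f (f x) - xstar) * (4*bL*bU) = gL*gU*(x - xstar) := by
            linear_combination e3 - hxs
          have hxp : 0 ≤ x - xstar := by linarith
          have hcontr : f (f x) - xstar ≤ (xu - xstar) * 2^n := by
            have h1' : gL*gU*(x - xstar) ≤ bL*bU*(x - xstar) :=
              mul_le_mul_of_nonneg_right hgg hxp
            have c1 : f (f x) - xstar ≤ (x - xstar)/2 := by
              apply le_of_mul_le_mul_right ?_ (by positivity : (0:ℝ) < 4*(bL*bU))
              have hb0 : 0 ≤ bL*bU*(x - xstar) := mul_nonneg hbb.le hxp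
              linarith [e4, h1', hb0]
            have hp : (xu - xstar)*2^(n+1) = ((xu - xstar)*2^n)*2 := by ring
            linarith
          obtain ⟨m, hm1, hm2⟩ := ih (f (f x)) hzu hzm hcontr
          refine ⟨m + 2, ?_, ?_⟩
          · rw [Function.iterate_add_apply,
              show f^[2] x = f (f x) by simp [Function.iterate_succ_apply']]
            exact hm1
          · rw [Function.iterate_add_apply,
              show f^[2] x = f (f x) by simp [Function.iterate_succ_apply']]
            exact hm2
  -- right branch, with the needed power found
  have keyC : ∀ x : ℝ, xu < x → x ≤ xm →
      ∃ m : ℕ, xl ≤ f^[m] x ∧ f^[m] x ≤ xu := by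
    intro x hx1 hx2
    have hxuxs : (0:ℝ) < xu - xstar := by linarith
    obtain ⟨n, hn⟩ := pow_unbounded_of_one_lt ((x - xstar)/(xu - xstar)) (by norm_num : (1:ℝ) < 2)
    rw [div_lt_iff₀ hxuxs] at hn
    exact key n x hx1 hx2 (by linarith)
  -- left branch
  have keyA : ∀ x : ℝ, 0 ≤ x → x ≤ xl →
      ∃ m : ℕ, xl ≤ f^[m] x ∧ f^[m] x ≤ xu := by
    intro x hx0 hxle
    have hy : f x = (1 - gL * x) / (2*bU) := hf1 x hx0 hxle
    have hyl : xl ≤ f x := by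
      rw [hy, le_div_iff₀ (by linarith : (0:ℝ) < 2*bU)]
      linarith [mul_le_mul_of_nonneg_left hxle h4]
    have hym : f x ≤ xm := by
      rw [hy, hxm, div_le_div_iff₀ (by linarith : (0:ℝ) < 2*bU) hgU]
      linarith [mul_nonneg (mul_nonneg h4 hx0) hgU.le]
    by_cases hyu : f x ≤ xu
    · exact ⟨1, by simpa using hyl, by simpa using hyu⟩
    · push_neg at hyu
      obtain ⟨m, hm1, hm2⟩ := keyC (f x) hyu hym
      refine ⟨m + 1, ?_, ?_⟩
      · rw [Function.iterate_add_apply]; simpa using hm1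
      · rw [Function.iterate_add_apply]; simpa using hm2
  -- every nonnegative point reaches [xl, xu]
  have reach : ∀ x : ℝ, 0 ≤ x → ∃ m : ℕ, xl ≤ f^[m] x ∧ f^[m] x ≤ xu := by
    intro x hx0
    rcases le_or_gt x xl with hc1 | hc1
    · exact keyA x hx0 hc1
    · rcases le_or_gt x xu with hc2 | hc2
      · exact ⟨0, by simpa using le_of_lt hc1, by simpa using hc2⟩
      · rcases le_or_gt x xm with hc3 | hc3
        · exact keyC x hc2 hc3
        · have hfx : f x = 0 := hf4 x (le_of_lt hc3)
          obtain ⟨m, hm1, hm2⟩ := keyA (f x) (by rw [hfx]) (by rw [hfx]; exact le_of_lt hxl0)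
          refine ⟨m + 1, ?_, ?_⟩
          · rw [Function.iterate_add_apply]; simpa using hm1
          · rw [Function.iterate_add_apply]; simpa using hm2
  -- conclusion
  intro x hx0
  obtain ⟨m, hm1, hm2⟩ := reach x hx0
  have hfixm : f (f^[m] x) = f^[m] x := hfix _ hm1 hm2
  refine ⟨m, hfixm, hm1, hm2, ?_⟩
  intro k
  rw [add_comm, Function.iterate_add_apply]
  exact Function.iterate_fixed hfixm k
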